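/- Let Y be a locally convex space which is a Baire space, with seminorm family Γ_Y, let X be a (not necessarily Hausdorff) locally convex space with seminorm family Γ_X, let (T(t))_{t≥0} be a locally equicontinuous family of continuous linear maps from Y to X, and let H be a set of strictly positive functions [0,∞) → ℝ, each bounded on compact intervals, such that there exists a sequence (h_n)_{n∈ℕ} ⊆ H with the property that for every h ∈ H there is n ∈ ℕ with h_n(t)/h(t) → 0 as t → ∞. Then the following are equivalent: (i) for every y ∈ Y there exists h ∈ H with lim_{t→∞} h(t) T(t)y = 0 in X; (ii) there exists h ∈ H such that lim_{t→∞} h(t) T(t)y = 0 in X for every y ∈ Y. -/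

import Mathlib

open Filter Topology Bornology

/-- Proposition 4.3: Let `Y` be a locally convex Baire space with seminorm
family `ΓY`, `X` a (not necessarily Hausdorff) locally convex space with seminorm family `ΓX`,
`(T(t))_{t ≥ 0}` a locally equicontinuous family of continuous linear maps `Y → X` and `H` a set
of strictly positive weight functions, bounded on compact intervals, admitting a sequence
`(h_n) ⊆ H` such that every `h ∈ H` dominates some `h_n` (i.e. `h_n/h → 0` at infinity).
Then pointwise decay at some rate from `H` for every point is equivalent to decay at a single
rate from `H` for all points. -/
theorem statement14 {Y : Type*} [AddCommGroup Y] [Module ℝ Y] [TopologicalSpace Y]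
    [BaireSpace Y]
    {κ : Type*} [Nonempty κ] (ΓY : κ → Seminorm ℝ Y) (hΓY : WithSeminorms ΓY)
    {X : Type*} [AddCommGroup X] [Module ℝ X] [TopologicalSpace X]
    {ι : Type*} [Nonempty ι] (ΓX : ι → Seminorm ℝ X) (hΓX : WithSeminorms ΓX)
    (T : ℝ → Y →L[ℝ] X)
    (hloceq : ∀ t₀ : ℝ, 0 ≤ t₀ → ∀ i : ι, ∃ (F : Finset κ) (C : ℝ), 0 ≤ C ∧
      ∀ t : ℝ, 0 ≤ t → t ≤ t₀ → ∀ y : Y, ΓX i (T t y) ≤ C * (F.sup ΓY) y)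
    (H : Set (ℝ → ℝ))
    (hHpos : ∀ h ∈ H, ∀ t : ℝ, 0 ≤ t → 0 < h t)
    (hHbdd : ∀ h ∈ H, ∀ b : ℝ, 0 ≤ b → ∃ C : ℝ, ∀ t : ℝ, 0 ≤ t → t ≤ b → h t ≤ C)
    (hseq : ∃ hn : ℕ → (ℝ → ℝ), (∀ n : ℕ, hn n ∈ H) ∧
      ∀ h ∈ H, ∃ n : ℕ, Tendsto (fun t : ℝ => hn n t / h t) atTop (nhds 0)) :
    (∀ y : Y, ∃ h ∈ H, Tendsto (fun t : ℝ => h t • T t y) atTop (nhds 0)) ↔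
    (∃ h ∈ H, ∀ y : Y, Tendsto (fun t : ℝ => h t • T t y) atTop (nhds 0)) := by
  constructor
  swap
  · rintro ⟨h, hH, hy⟩ y
    exact ⟨h, hH, hy y⟩
  intro hpt
  haveI : IsTopologicalAddGroup Y := hΓY.topologicalAddGroup
  haveI : ContinuousSMul ℝ Y := hΓY.continuousSMul
  haveI : Nonempty Y := ⟨0⟩
  obtain ⟨hn, hnH, hdom⟩ := hseq
  -- translation between convergence in X and convergence of seminorms
  have key : ∀ g : ℝ → ℝ, (∀ t : ℝ, 0 ≤ t → 0 ≤ g t) → ∀ y : Y,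
      (Tendsto (fun t : ℝ => g t • T t y) atTop (nhds 0) ↔
        ∀ i, Tendsto (fun t : ℝ => g t * ΓX i (T t y)) atTop (nhds 0)) := by
    intro g hg y
    rw [hΓX.tendsto_nhds]
    constructor
    · intro hconv i
      rw [tendsto_order]
      constructor
      · intro a ha
        filter_upwards [eventually_ge_atTop (0 : ℝ)] with t ht
        exact lt_of_lt_of_le ha (mul_nonneg (hg t ht) (apply_nonneg _ _))
      · intro a ha
        filter_upwards [hconv i a ha, eventually_ge_atTop (0 : ℝ)] with t h1 h2
        rwa [sub_zero, map_smul_eq_mul, Real.norm_eq_abs, abs_of_nonneg (hg t h2)] at h1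
    · intro hconv i ε hε
      filter_upwards [(hconv i).eventually (gt_mem_nhds hε),
        eventually_ge_atTop (0 : ℝ)] with t h1 h2
      rwa [sub_zero, map_smul_eq_mul, Real.norm_eq_abs, abs_of_nonneg (hg t h2)]
  -- the subspaces S n
  let S : ℕ → Submodule ℝ Y := fun n =>
    { carrier := {y | ∀ i, Tendsto (fun t : ℝ => hn n t * ΓX i (T t y)) atTop (nhds 0)}
      add_mem' := by
        intro a b ha hb i
        have hsum := (ha i).add (hb i)
        rw [add_zero] at hsum
        refine squeeze_zero' ?_ ?_ hsum
        · filter_upwards [eventually_ge_atTop (0 : ℝ)] with t ht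
          exact mul_nonneg ((hHpos _ (hnH n) t ht).le) (apply_nonneg _ _)
        · filter_upwards [eventually_ge_atTop (0 : ℝ)] with t ht
          have h1 : ΓX i (T t (a + b)) ≤ ΓX i (T t a) + ΓX i (T t b) := by
            rw [map_add]; exact map_add_le_add _ _ _
          calc hn n t * ΓX i (T t (a + b)) ≤ hn n t * (ΓX i (T t a) + ΓX i (T t b)) :=
                mul_le_mul_of_nonneg_left h1 ((hHpos _ (hnH n) t ht).le)
            _ = hn n t * ΓX i (T t a) + hn n t * ΓX i (T t b) := by ring
      zero_mem' := by
        intro i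
        simp only [map_zero, mul_zero]
        exact tendsto_const_nhds
      smul_mem' := by
        intro c y hy i
        have := (hy i).const_mul ‖c‖
        rw [mul_zero] at this
        refine this.congr fun t => ?_
        rw [map_smul, map_smul_eq_mul]
        ring }
  have hmemS : ∀ (n : ℕ) (y : Y),
      y ∈ S n ↔ ∀ i, Tendsto (fun t : ℝ => hn n t * ΓX i (T t y)) atTop (nhds 0) :=
    fun n y => Iff.rfl
  -- every y belongs to some S n
  have cover : ∀ y : Y, ∃ n, y ∈ S n := by
    intro y
    obtain ⟨h, hH, hconv⟩ := hpt y
    obtain ⟨n, hndom⟩ := hdom h hH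
    refine ⟨n, fun i => ?_⟩
    have h2 := ((key h (fun t ht => (hHpos h hH t ht).le) y).1 hconv) i
    have h3 := hndom.mul h2
    rw [zero_mul] at h3
    refine h3.congr' ?_
    filter_upwards [eventually_ge_atTop (0 : ℝ)] with t ht
    have hne : h t ≠ 0 := (hHpos h hH t ht).ne'
    field_simp
  -- some S n is non-meagre
  have hnonmeagre : ∃ n, ¬ IsMeagre (S n : Set Y) := by
    by_contra hcon
    push_neg at hcon
    have hU : IsMeagre (⋃ n, (S n : Set Y)) := isMeagre_iUnion hcon
    have hUuniv : (⋃ n, (S n : Set Y)) = Set.univ := by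
      ext y
      simp only [Set.mem_iUnion, Set.mem_univ, iff_true, SetLike.mem_coe]
      exact cover y
    rw [hUuniv] at hU
    have hEmp : (∅ : Set Y) ∈ residual Y := by rwa [IsMeagre, Set.compl_univ] at hU
    exact Set.not_nonempty_empty ((dense_of_mem_residual hEmp).nonempty)
  obtain ⟨n, hnm⟩ := hnonmeagre
  -- S n is dense
  have hdense : Dense (S n : Set Y) := by
    have hno : ¬ IsNowhereDense (S n : Set Y) := by
      intro hnd
      have hd : Dense ((closure (S n : Set Y))ᶜ) :=
        interior_eq_empty_iff_dense_compl.mp hnd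
      have hres : (closure (S n : Set Y))ᶜ ∈ residual Y :=
        residual_of_dense_open isClosed_closure.isOpen_compl hd
      exact hnm (Filter.mem_of_superset hres (Set.compl_subset_compl.mpr subset_closure))
    have hint : (interior (closure (S n : Set Y))).Nonempty :=
      Set.nonempty_iff_ne_empty.mpr hno
    haveI : (nhdsWithin (0 : ℝ) {x : ℝ | IsUnit x}).NeBot :=
      NormedField.nhdsWithin_isUnit_neBot
    have htop : (S n).topologicalClosure = ⊤ := by
      apply Submodule.eq_top_of_nonempty_interior'
      rwa [Submodule.topologicalClosure_coe]
    have hclo : closure (S n : Set Y) = Set.univ := by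
      have := congrArg (fun s : Submodule ℝ Y => (s : Set Y)) htop
      simpa using this
    rw [dense_iff_closure_eq]
    exact hclo
  -- equicontinuity of the weighted family, one target seminorm at a time
  have equi : ∀ i : ι, ∃ (F : Finset κ) (r C : ℝ), 0 < r ∧ 0 < C ∧
      ∀ y : Y, (F.sup ΓY) y < r → ∀ t : ℝ, 0 ≤ t → hn n t * ΓX i (T t y) ≤ C := by
    intro i
    set A : ℕ → Set Y := fun k =>
      {y | ∀ t : ℝ, 0 ≤ t → hn n t * ΓX i (T t y) ≤ (k : ℝ) + 1} with hA
    have hAclosed : ∀ k, IsClosed (A k) := by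
      intro k
      have hset : A k = ⋂ (t : ℝ) (_ : 0 ≤ t),
          {y | hn n t * ΓX i (T t y) ≤ (k : ℝ) + 1} := by
        ext y; simp [hA, Set.mem_iInter]
      rw [hset]
      refine isClosed_iInter fun t => isClosed_iInter fun _ => ?_
      have hcont : Continuous fun y : Y => hn n t * ΓX i (T t y) :=
        continuous_const.mul ((hΓX.continuous_seminorm i).comp (T t).continuous)
      exact isClosed_le hcont continuous_const
    have hsub : (S n : Set Y) ⊆ ⋃ k, A k := by
      intro y hy
      have h1 := (hmemS n y).1 hy i
      obtain ⟨t₀, ht₀⟩ := eventually_atTop.1 (h1.eventually (gt_mem_nhds one_pos))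
      set t₁ : ℝ := max t₀ 0 with ht₁def
      have ht₁ : (0 : ℝ) ≤ t₁ := le_max_right _ _
      obtain ⟨F, C, hC, hFb⟩ := hloceq t₁ ht₁ i
      obtain ⟨C', hC'⟩ := hHbdd (hn n) (hnH n) t₁ ht₁
      set M : ℝ := max 1 (C' * (C * (F.sup ΓY) y)) with hM
      refine Set.mem_iUnion.2 ⟨⌈M⌉₊, fun t ht => ?_⟩
      rcases le_or_gt t t₁ with hle | hgt
      · have hb1 : hn n t ≤ C' := hC' t ht hle
        have hb2 : ΓX i (T t y) ≤ C * (F.sup ΓY) y := hFb t ht hle y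
        have : hn n t * ΓX i (T t y) ≤ C' * (C * (F.sup ΓY) y) :=
          mul_le_mul hb1 hb2 (apply_nonneg _ _)
            (le_trans (hHpos _ (hnH n) t ht).le hb1)
        calc hn n t * ΓX i (T t y) ≤ M := le_trans this (le_max_right _ _)
          _ ≤ (⌈M⌉₊ : ℝ) := Nat.le_ceil M
          _ ≤ (⌈M⌉₊ : ℝ) + 1 := by linarith
      · have : hn n t * ΓX i (T t y) < 1 :=
          ht₀ t (le_trans (le_max_left _ _) hgt.le)
        calc hn n t * ΓX i (T t y) ≤ 1 := this.le
          _ ≤ M := le_max_left _ _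
          _ ≤ (⌈M⌉₊ : ℝ) := Nat.le_ceil M
          _ ≤ (⌈M⌉₊ : ℝ) + 1 := by linarith
    have hAk : ∃ k, ¬ IsMeagre (A k) := by
      by_contra hcon
      push_neg at hcon
      exact hnm ((isMeagre_iUnion hcon).mono hsub)
    obtain ⟨k, hk⟩ := hAk
    have hint : (interior (A k)).Nonempty := by
      by_contra hc
      rw [Set.not_nonempty_iff_eq_empty] at hc
      have hnd : IsNowhereDense (A k) := by
        rw [IsNowhereDense, (hAclosed k).closure_eq, hc]
      have hd : Dense ((closure (A k))ᶜ) := interior_eq_empty_iff_dense_compl.mp hnd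
      have hres : (closure (A k))ᶜ ∈ residual Y :=
        residual_of_dense_open isClosed_closure.isOpen_compl hd
      exact hk (Filter.mem_of_superset hres (Set.compl_subset_compl.mpr subset_closure))
    obtain ⟨x, hx⟩ := hint
    have hV : (fun y : Y => y + x) ⁻¹' interior (A k) ∈ nhds (0 : Y) := by
      apply (isOpen_interior.preimage (continuous_add_right x)).mem_nhds
      simpa using hx
    obtain ⟨F, r, hr, hFr⟩ := (hΓY.mem_nhds_iff _ _).1 hV
    refine ⟨F, r, 2 * ((k : ℝ) + 1), hr, by positivity, fun y hy t ht => ?_⟩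
    have hyV : y + x ∈ A k := by
      have : y ∈ (F.sup ΓY).ball 0 r := by
        rw [Seminorm.mem_ball_zero]; exact hy
      exact interior_subset (hFr this)
    have hxA : x ∈ A k := interior_subset hx
    have hnn : 0 ≤ hn n t := (hHpos _ (hnH n) t ht).le
    have htri : ΓX i (T t y) ≤ ΓX i (T t (y + x)) + ΓX i (T t x) := by
      have : T t y = T t (y + x) - T t x := by rw [map_add]; abel
      rw [this]
      exact map_sub_le_add _ _ _
    calc hn n t * ΓX i (T t y)
        ≤ hn n t * (ΓX i (T t (y + x)) + ΓX i (T t x)) :=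
          mul_le_mul_of_nonneg_left htri hnn
      _ = hn n t * ΓX i (T t (y + x)) + hn n t * ΓX i (T t x) := by ring
      _ ≤ ((k : ℝ) + 1) + ((k : ℝ) + 1) := add_le_add (hyV t ht) (hxA t ht)
      _ = 2 * ((k : ℝ) + 1) := by ring
  -- conclusion
  refine ⟨hn n, hnH n, fun y => ?_⟩
  rw [key (hn n) (fun t ht => (hHpos _ (hnH n) t ht).le) y]
  intro i
  obtain ⟨F, r, C, hr, hC, hbound⟩ := equi i
  rw [tendsto_order]
  constructor
  · intro a ha
    filter_upwards [eventually_ge_atTop (0 : ℝ)] with t ht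
    exact lt_of_lt_of_le ha (mul_nonneg (hHpos _ (hnH n) t ht).le (apply_nonneg _ _))
  · intro ε hε
    set μ : ℝ := ε / (2 * C) with hμdef
    have hμ : 0 < μ := by positivity
    have hball : (F.sup ΓY).ball y (r * μ) ∈ nhds y :=
      hΓY.hasBasis_ball.mem_of_mem (i := (F, r * μ)) (by positivity : (0:ℝ) < r * μ)
    obtain ⟨z, hzB, hzS⟩ := mem_closure_iff_nhds.mp (hdense y) _ hball
    have hzS' : ∀ j, Tendsto (fun t : ℝ => hn n t * ΓX j (T t z)) atTop (nhds 0) :=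
      (hmemS n z).1 hzS
    -- the rescaled difference
    set w : Y := μ⁻¹ • (y - z) with hw
    have hpw : (F.sup ΓY) w < r := by
      have h1 : (F.sup ΓY) (y - z) < r * μ := by
        have h2 := (Seminorm.mem_ball (F.sup ΓY)).1 hzB
        rwa [← map_neg_eq_map, neg_sub] at h2
      rw [hw, map_smul_eq_mul, Real.norm_eq_abs, abs_of_pos (inv_pos.mpr hμ)]
      calc μ⁻¹ * (F.sup ΓY) (y - z) < μ⁻¹ * (r * μ) :=
            mul_lt_mul_of_pos_left h1 (inv_pos.mpr hμ)
        _ = r := by rw [mul_comm r μ, inv_mul_cancel_left₀ hμ.ne']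
    have hμC : μ * C = ε / 2 := by
      rw [hμdef]; field_simp
    have hyz : y - z = μ • w := by
      rw [hw, smul_smul, mul_inv_cancel₀ hμ.ne', one_smul]
    filter_upwards [eventually_ge_atTop (0 : ℝ),
      (hzS' i).eventually (gt_mem_nhds (half_pos hε))] with t ht hz
    have hnn : 0 ≤ hn n t := (hHpos _ (hnH n) t ht).le
    have htri : ΓX i (T t y) ≤ ΓX i (T t z) + ΓX i (T t (y - z)) := by
      have he : T t y = T t z + T t (y - z) := by rw [map_sub]; abel
      rw [he]
      exact map_add_le_add _ _ _
    have hq2 : hn n t * ΓX i (T t (y - z)) ≤ ε / 2 := by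
      rw [hyz, map_smul, map_smul_eq_mul, Real.norm_eq_abs, abs_of_pos hμ]
      calc hn n t * (μ * ΓX i (T t w)) = μ * (hn n t * ΓX i (T t w)) := by ring
        _ ≤ μ * C := mul_le_mul_of_nonneg_left (hbound w hpw t ht) hμ.le
        _ = ε / 2 := hμC
    calc hn n t * ΓX i (T t y)
        ≤ hn n t * (ΓX i (T t z) + ΓX i (T t (y - z))) :=
          mul_le_mul_of_nonneg_left htri hnn
      _ = hn n t * ΓX i (T t z) + hn n t * ΓX i (T t (y - z)) := by ring
      _ < ε / 2 + ε / 2 := add_lt_add_of_lt_of_le hz hq2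
      _ = ε := by ring
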